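/- If L : [0,1] → [0,1] satisfies the non-linear integral equation L(s) = ∫_s^1 (1/w)(1 − e^{−L(1−w)}) dw for all s ∈ [0,1), and L(1) = 0, then L is identically zero on [0,1]. -/

import Mathlib

open MeasureTheory Real Set Filter

/-- Quadratic lower bound on `exp (-x)`: for `0 ≤ x ≤ 2`,
`1 - exp (-x) ≤ x - x^2/4`. -/
lemma stmt12_exp_quad (x : ℝ) (hx0 : 0 ≤ x) (hx2 : x ≤ 2) :
    1 - Real.exp (-x) ≤ x - x ^ 2 / 4 := by
  have h1 : 1 - x / 2 ≤ Real.exp (-(x / 2)) := by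
    have := Real.add_one_le_exp (-(x / 2)); linarith
  have h2 : (1 - x / 2) ^ 2 ≤ Real.exp (-(x / 2)) ^ 2 :=
    pow_le_pow_left₀ (by linarith) h1 2
  have h3 : Real.exp (-(x / 2)) ^ 2 = Real.exp (-x) := by
    rw [sq, ← Real.exp_add]; ring_nf
  nlinarith [h2, h3]

set_option maxHeartbeats 1000000 in
/-- If `L : [0,1] → [0,1]` satisfies
`L(s) = ∫_s^1 (1/w)(1 − e^{−L(1−w)}) dw` for all `s ∈ [0,1)` and `L(1) = 0`,
then `L` is identically zero on `[0,1]`. -/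
theorem stmt12 (L : ℝ → ℝ) (hmap : ∀ s ∈ Set.Icc (0:ℝ) 1, L s ∈ Set.Icc (0:ℝ) 1)
    (hL : ∀ s ∈ Set.Ico (0:ℝ) 1,
      L s = ∫ w in Set.Ioc s 1, (1 / w) * (1 - Real.exp (-(L (1 - w)))))
    (hL1 : L 1 = 0) :
    ∀ s ∈ Set.Icc (0:ℝ) 1, L s = 0 := by
  set f : ℝ → ℝ := fun w => (1 / w) * (1 - Real.exp (-(L (1 - w)))) with hfdef
  have hLnn : ∀ s ∈ Icc (0:ℝ) 1, 0 ≤ L s := fun s hs => (hmap s hs).1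
  have hLle : ∀ s ∈ Icc (0:ℝ) 1, L s ≤ 1 := fun s hs => (hmap s hs).2
  have hfnn : ∀ w ∈ Ioc (0:ℝ) 1, 0 ≤ f w := by
    intro w hw
    have hL0 : 0 ≤ L (1 - w) := hLnn _ ⟨by linarith [hw.2], by linarith [hw.1.le]⟩
    have hexp1 : Real.exp (-(L (1 - w))) ≤ 1 := by
      rw [Real.exp_le_one_iff]; linarith
    have h1w : 0 ≤ 1 / w := one_div_nonneg.2 hw.1.le
    exact mul_nonneg h1w (by linarith)
  -- crude bound : L(1-t) ≤ 2 t
  have hcrude : ∀ t ∈ Ioc (0:ℝ) 1, L (1 - t) ≤ 2 * t := by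
    intro t ht
    rcases le_or_gt (1/2 : ℝ) t with h | h
    · have := hLle (1 - t) ⟨by linarith [ht.2], by linarith [ht.1.le]⟩
      linarith
    · have hs : (1 - t) ∈ Ico (0:ℝ) 1 := ⟨by linarith [ht.2], by linarith [ht.1]⟩
      rw [hL _ hs]
      have hmeas : MeasurableSet (Ioc (1 - t) (1:ℝ)) := measurableSet_Ioc
      have hb : (∫ w in Ioc (1 - t) 1, f w) ≤ ∫ w in Ioc (1 - t) 1, (2:ℝ) := by
        apply integral_mono_of_nonneg
        · filter_upwards [ae_restrict_mem hmeas] with w hw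
          exact hfnn w ⟨by linarith [hw.1], hw.2⟩
        · exact integrableOn_const (by rw [Real.volume_Ioc]; exact ENNReal.ofReal_lt_top.ne)
        · filter_upwards [ae_restrict_mem hmeas] with w hw
          have hw0 : (1/2 : ℝ) ≤ w := by linarith [hw.1]
          have h1w : 1 / w ≤ 2 := by rw [div_le_iff₀ (by linarith)]; linarith
          have hexp0 : 0 < Real.exp (-(L (1 - w))) := Real.exp_pos _
          have : 1 - Real.exp (-(L (1 - w))) ≤ 1 := by linarith
          calc f w ≤ (1 / w) * 1 :=
                mul_le_mul_of_nonneg_left this (by positivity)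
            _ ≤ 2 := by linarith
      rw [setIntegral_const, smul_eq_mul, measureReal_def, Real.volume_Ioc,
        ENNReal.toReal_ofReal (by linarith [ht.1.le] : (0:ℝ) ≤ 1 - (1 - t))] at hb
      linarith
  -- the supremum
  set S : Set ℝ := (fun t => L (1 - t) / t) '' (Ioc 0 1) with hSdef
  have hSne : S.Nonempty := ⟨L 0 / 1, ⟨1, right_mem_Ioc.2 one_pos, by norm_num⟩⟩
  have hSbdd : BddAbove S := by
    refine ⟨2, ?_⟩
    rintro x ⟨t, ht, rfl⟩
    rw [div_le_iff₀ ht.1]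
    have := hcrude t ht; linarith
  set A := sSup S with hAdef
  have hA2 : A ≤ 2 := csSup_le hSne (by
    rintro x ⟨t, ht, rfl⟩
    rw [div_le_iff₀ ht.1]
    have := hcrude t ht; linarith)
  have hA0 : 0 ≤ A := by
    have hmem : L 0 / 1 ∈ S := ⟨1, right_mem_Ioc.2 one_pos, by norm_num⟩
    have h0 : (0:ℝ) ≤ L 0 / 1 := by
      have := hLnn 0 ⟨le_refl 0, zero_le_one⟩; linarith
    exact h0.trans (le_csSup hSbdd hmem)
  have hkey : ∀ u ∈ Ioc (0:ℝ) 1, L (1 - u) ≤ A * u := by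
    intro u hu
    have hmem : L (1 - u) / u ∈ S := ⟨u, hu, rfl⟩
    have := le_csSup hSbdd hmem
    rwa [div_le_iff₀ hu.1] at this
  set c : ℝ := min (1/4 : ℝ) (A ^ 2 / 8) with hcdef
  have hc0 : 0 ≤ c := le_min (by norm_num) (by positivity)
  have hc4 : c ≤ 1/4 := min_le_left _ _
  have hc8 : c ≤ A ^ 2 / 8 := min_le_right _ _
  -- main estimate
  have hmain : ∀ t ∈ Ioc (0:ℝ) 1, L (1 - t) ≤ A * t - c * t / 2 := by
    intro t ht
    have hs : (1 - t) ∈ Ico (0:ℝ) 1 := ⟨by linarith [ht.2], by linarith [ht.1]⟩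
    rw [hL _ hs]
    set G : ℝ → ℝ := fun u => A - (Ioi (1/2 : ℝ)).indicator (fun _ => c) u with hGdef
    have hmeas : MeasurableSet (Ioc (1 - t) (1:ℝ)) := measurableSet_Ioc
    have hvol : volume (Ioc (1 - t) (1:ℝ)) < ⊤ := by
      rw [Real.volume_Ioc]; exact ENNReal.ofReal_lt_top
    have hconstInt : IntegrableOn (fun _ : ℝ => A) (Ioc (1 - t) 1) volume :=
      integrableOn_const hvol.ne
    have hindInt : IntegrableOn ((Ioi (1/2 : ℝ)).indicator (fun _ => c)) (Ioc (1 - t) 1) volume :=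
      (integrableOn_const hvol.ne :
        IntegrableOn (fun _ : ℝ => c) (Ioc (1 - t) 1) volume).indicator measurableSet_Ioi
    have hGint : IntegrableOn G (Ioc (1 - t) 1) volume := hconstInt.sub hindInt
    have hb : (∫ w in Ioc (1 - t) 1, f w) ≤ ∫ w in Ioc (1 - t) 1, G w := by
      apply integral_mono_of_nonneg
      · filter_upwards [ae_restrict_mem hmeas] with w hw
        exact hfnn w ⟨by linarith [hw.1, ht.2], hw.2⟩
      · exact hGint
      · filter_upwards [ae_restrict_mem hmeas] with w hw
        have hw0 : 0 < w := by linarith [hw.1, ht.2]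
        have hw1 : w ≤ 1 := hw.2
        have hx0 : 0 ≤ L (1 - w) := hLnn _ ⟨by linarith, by linarith⟩
        have hx1 : L (1 - w) ≤ 1 := hLle _ ⟨by linarith, by linarith⟩
        have hxA : L (1 - w) ≤ A * w := hkey w ⟨hw0, hw1⟩
        set x := L (1 - w) with hxdef
        have hq : 1 - Real.exp (-x) ≤ x - x ^ 2 / 4 :=
          stmt12_exp_quad x hx0 (by linarith)
        have hfw : f w ≤ (1 / w) * (x - x ^ 2 / 4) :=
          mul_le_mul_of_nonneg_left hq (by positivity)
        by_cases hhalf : w ∈ Ioi (1/2 : ℝ)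
        · have hGw : G w = A - c := by
            have hind : (Ioi (1/2:ℝ)).indicator (fun _ => c) w = c :=
              Set.indicator_of_mem hhalf _
            show A - (Ioi (1/2:ℝ)).indicator (fun _ => c) w = A - c
            rw [hind]
          rw [hGw]
          have hwhalf : (1/2 : ℝ) < w := hhalf
          -- show (1/w) * (x - x^2/4) ≤ A - c
          have hgoal : x - x ^ 2 / 4 ≤ (A - c) * w := by
            rcases le_total (A * w) 1 with hAw | hAw
            · -- x ≤ A w ≤ 1 ; x - x²/4 ≤ Aw - (Aw)²/4 ; (Aw)²/4 ≥ c w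
              have h1 : x - x ^ 2 / 4 ≤ A * w - (A * w) ^ 2 / 4 := by
                nlinarith [mul_nonneg (sub_nonneg.2 hxA) (by linarith : 0 ≤ 4 - (A * w + x))]
              have h2 : c * w ≤ (A * w) ^ 2 / 4 := by
                have : c * w ≤ (A ^ 2 / 8) * w :=
                  mul_le_mul_of_nonneg_right hc8 hw0.le
                nlinarith [sq_nonneg A, mul_nonneg (mul_nonneg hA0 hA0) hw0.le]
              nlinarith
            · -- A w ≥ 1, use x ≤ 1
              have h1 : x - x ^ 2 / 4 ≤ 3 / 4 := by nlinarith
              have h2 : c * w ≤ 1/4 := by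
                calc c * w ≤ (1/4) * 1 :=
                      mul_le_mul hc4 hw1 hw0.le (by norm_num)
                  _ = 1/4 := by ring
              nlinarith
          calc f w ≤ (1 / w) * (x - x ^ 2 / 4) := hfw
            _ ≤ A - c := by
                rw [div_mul_eq_mul_div, div_le_iff₀ hw0]
                linarith [hgoal]
        · have hGw : G w = A := by
            have hind : (Ioi (1/2:ℝ)).indicator (fun _ => c) w = 0 :=
              Set.indicator_of_notMem hhalf _
            show A - (Ioi (1/2:ℝ)).indicator (fun _ => c) w = A
            rw [hind, sub_zero]
          rw [hGw]
          have h1 : x - x ^ 2 / 4 ≤ A * w := by nlinarith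
          calc f w ≤ (1 / w) * (x - x ^ 2 / 4) := hfw
            _ ≤ (1 / w) * (A * w) := mul_le_mul_of_nonneg_left h1 (by positivity)
            _ = A := by field_simp
    -- compute the integral of G
    have hcalc : (∫ w in Ioc (1 - t) 1, G w)
        = A * t - c * (1 - max (1 - t) (1/2)) := by
      rw [hGdef]
      rw [integral_sub hconstInt hindInt]
      rw [setIntegral_const, setIntegral_indicator measurableSet_Ioi,
        Set.Ioc_inter_Ioi, setIntegral_const]
      rw [smul_eq_mul, smul_eq_mul, measureReal_def, measureReal_def, Real.volume_Ioc, Real.volume_Ioc,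
        ENNReal.toReal_ofReal (by linarith [ht.1.le] : (0:ℝ) ≤ 1 - (1 - t)),
        ENNReal.toReal_ofReal (by
          have : max (1 - t) (1/2 : ℝ) ≤ 1 := max_le (by linarith [ht.1]) (by norm_num)
          linarith)]
      have hmax : (1 - t) ⊔ (1/2 : ℝ) = max (1 - t) (1/2) := rfl
      rw [hmax]
      ring
    have hmaxb : max (1 - t) (1/2 : ℝ) ≤ 1 - t / 2 :=
      max_le (by linarith [ht.1]) (by linarith [ht.2])
    have hfin : c * (t / 2) ≤ c * (1 - max (1 - t) (1/2)) :=
      mul_le_mul_of_nonneg_left (by linarith) hc0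
    calc (∫ w in Ioc (1 - t) 1, f w) ≤ ∫ w in Ioc (1 - t) 1, G w := hb
      _ = A * t - c * (1 - max (1 - t) (1/2)) := hcalc
      _ ≤ A * t - c * t / 2 := by linarith
  -- conclude A = 0
  have hAle : A ≤ A - c / 2 := by
    apply csSup_le hSne
    rintro x ⟨t, ht, rfl⟩
    rw [div_le_iff₀ ht.1]
    have := hmain t ht
    nlinarith
  have hcle : c ≤ 0 := by linarith
  have hAzero : A = 0 := by
    have h8 : A ^ 2 / 8 ≤ 0 := by
      rcases le_total (1/4 : ℝ) (A ^ 2 / 8) with h | h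
      · exfalso
        have : c = 1/4 := min_eq_left h
        linarith
      · have : c = A ^ 2 / 8 := min_eq_right h
        linarith
    nlinarith [sq_nonneg A]
  -- finish
  intro s hs
  rcases eq_or_lt_of_le hs.2 with h1 | h1
  · rw [h1]; exact hL1
  · have ht : (1 - s) ∈ Ioc (0:ℝ) 1 := ⟨by linarith, by linarith [hs.1]⟩
    have h2 := hkey (1 - s) ht
    have h3 : (1 : ℝ) - (1 - s) = s := by ring
    rw [h3] at h2
    have h4 := hLnn s hs
    rw [hAzero] at h2
    linarith
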